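/- For every u₁ > 0 and every k with 2 ≤ k ≤ n, the derivative with respect to u₁ of the function u₁ ↦ (U_k(u₁) − U₁(u₁))/g₁(U_k(u₁)) is strictly negative. -/

import Mathlib

open Finset

noncomputable def U (g1 : ℝ → ℝ) (h : ℝ) : ℕ → ℝ → ℝ
  | 0, u => u
  | 1, u => u
  | 2, u => u + h ^ 2 / 2 * g1 u
  | k + 3, u => 2 * U g1 h (k + 2) u - U g1 h (k + 1) u + h ^ 2 * g1 (U g1 h (k + 2) u)

/-- The derivative of `U k` with respect to the initial value. -/
noncomputable def Vv (g1 : ℝ → ℝ) (h : ℝ) : ℕ → ℝ → ℝ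
  | 0, _ => 1
  | 1, _ => 1
  | 2, u => 1 + h ^ 2 / 2 * deriv g1 u
  | k + 3, u => 2 * Vv g1 h (k + 2) u - Vv g1 h (k + 1) u
      + h ^ 2 * (deriv g1 (U g1 h (k + 2) u) * Vv g1 h (k + 2) u)

section Aux

variable {g1 : ℝ → ℝ} {h : ℝ}

lemma g1_diff (hg1C : ContDiff ℝ 3 g1) : Differentiable ℝ g1 :=
  hg1C.differentiable (by norm_num)

lemma deriv_g1_contDiff (hg1C : ContDiff ℝ 3 g1) : ContDiff ℝ 2 (deriv g1) := by
  have h3 : ContDiff ℝ ((2 : WithTop ℕ∞) + 1) g1 := hg1C.of_le (le_of_eq (by norm_num))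
  rw [contDiff_succ_iff_deriv] at h3
  exact h3.2.2

lemma g1_pos (hg1C : ContDiff ℝ 3 g1) (hg10 : g1 0 = 0)
    (hg1d1 : ∀ x > 0, 0 < deriv g1 x) {x : ℝ} (hx : 0 < x) : 0 < g1 x := by
  have hsm : StrictMonoOn g1 (Set.Ici 0) := by
    apply strictMonoOn_of_deriv_pos (convex_Ici 0) (g1_diff hg1C).continuous.continuousOn
    intro y hy
    rw [interior_Ici] at hy
    exact hg1d1 y hy
  have := hsm (Set.self_mem_Ici) (Set.mem_Ici.2 hx.le) hx
  rwa [hg10] at this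

lemma deriv_g1_strictMono (hg1C : ContDiff ℝ 3 g1)
    (hg1d2 : ∀ x > 0, 0 < iteratedDeriv 2 g1 x) :
    StrictMonoOn (deriv g1) (Set.Ici 0) := by
  have hcd : ContDiff ℝ 2 (deriv g1) := deriv_g1_contDiff hg1C
  apply strictMonoOn_of_deriv_pos (convex_Ici 0) hcd.continuous.continuousOn
  intro y hy
  rw [interior_Ici] at hy
  have h2 : iteratedDeriv 2 g1 = deriv (deriv g1) := by
    rw [iteratedDeriv_succ, iteratedDeriv_one]
  have := hg1d2 y hy
  rwa [h2] at this

/-- Strict convexity inequality: for `0 < a < b`, `g1 b - g1 a < deriv g1 b * (b - a)`. -/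
lemma slope_lt (hg1C : ContDiff ℝ 3 g1)
    (hg1d2 : ∀ x > 0, 0 < iteratedDeriv 2 g1 x)
    {a b : ℝ} (ha : 0 < a) (hab : a < b) :
    g1 b - g1 a < deriv g1 b * (b - a) := by
  obtain ⟨c, hc, hcd⟩ := exists_deriv_eq_slope g1 hab
    (g1_diff hg1C).continuous.continuousOn ((g1_diff hg1C).differentiableOn)
  have hclt : deriv g1 c < deriv g1 b :=
    deriv_g1_strictMono hg1C hg1d2 (Set.mem_Ici.2 (ha.trans hc.1).le)
      (Set.mem_Ici.2 (ha.trans (hc.1.trans hc.2)).le) hc.2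
  have hba : 0 < b - a := sub_pos.2 hab
  have : (g1 b - g1 a) / (b - a) < deriv g1 b := hcd ▸ hclt
  calc g1 b - g1 a = (g1 b - g1 a) / (b - a) * (b - a) := by field_simp
    _ < deriv g1 b * (b - a) := by
        exact mul_lt_mul_of_pos_right this hba

/-- The key convexity step: pushes inequality (ii) at a pair of points to inequality (iii). -/
lemma key_step (hg1C : ContDiff ℝ 3 g1) (hg10 : g1 0 = 0)
    (hg1d1 : ∀ x > 0, 0 < deriv g1 x)
    (hg1d2 : ∀ x > 0, 0 < iteratedDeriv 2 g1 x)
    {a b va vb : ℝ} (ha : 0 < a) (hab : a < b) (hva : 0 < va) (hd' : va < vb)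
    (hii : (vb - va) * g1 a ≤ (b - a) * (deriv g1 a * va)) :
    (vb - va) * g1 b < (b - a) * (deriv g1 b * vb) := by
  have hba : g1 b - g1 a < deriv g1 b * (b - a) := slope_lt hg1C hg1d2 ha hab
  have hmono : deriv g1 a ≤ deriv g1 b :=
    (deriv_g1_strictMono hg1C hg1d2).monotoneOn (Set.mem_Ici.2 ha.le)
      (Set.mem_Ici.2 (ha.trans hab).le) hab.le
  have hqb : 0 < deriv g1 b := hg1d1 b (ha.trans hab)
  have hd0 : 0 < vb - va := sub_pos.2 hd'
  have hbapos : 0 < b - a := sub_pos.2 hab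
  nlinarith [mul_lt_mul_of_pos_left hba hd0,
    mul_le_mul_of_nonneg_right (mul_le_mul_of_nonneg_right hmono hva.le) hbapos.le]

end Aux

section Main

variable {g1 : ℝ → ℝ} {h : ℝ}

/-- The big simultaneous induction. -/
lemma main_induction (hg1C : ContDiff ℝ 3 g1) (hg10 : g1 0 = 0)
    (hg1d1 : ∀ x > 0, 0 < deriv g1 x)
    (hg1d2 : ∀ x > 0, 0 < iteratedDeriv 2 g1 x)
    (hhpos : 0 < h) :
    ∀ k : ℕ, 1 ≤ k → ∀ u : ℝ, 0 < u →
      (u ≤ U g1 h k u) ∧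
      (U g1 h k u < U g1 h (k + 1) u) ∧
      (1 ≤ Vv g1 h k u) ∧
      (Vv g1 h k u < Vv g1 h (k + 1) u) ∧
      HasDerivAt (U g1 h k) (Vv g1 h k u) u ∧
      HasDerivAt (U g1 h (k + 1)) (Vv g1 h (k + 1) u) u ∧
      ((Vv g1 h (k + 1) u - Vv g1 h k u) * g1 (U g1 h k u) ≤
        (U g1 h (k + 1) u - U g1 h k u) * (deriv g1 (U g1 h k u) * Vv g1 h k u)) ∧
      ((Vv g1 h (k + 1) u - Vv g1 h k u) * g1 (U g1 h (k + 1) u) <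
        (U g1 h (k + 1) u - U g1 h k u) * (deriv g1 (U g1 h (k + 1) u) * Vv g1 h (k + 1) u)) ∧
      ((Vv g1 h (k + 1) u - 1) * (U g1 h (k + 1) u - U g1 h k u) ≤
        (U g1 h (k + 1) u - u) * (Vv g1 h (k + 1) u - Vv g1 h k u)) := by
  have hdg := g1_diff hg1C
  have h2 : (0:ℝ) < h ^ 2 := by positivity
  intro k hk
  induction k, hk using Nat.le_induction with
  | base =>
    intro u hu
    have hgu : 0 < g1 u := g1_pos hg1C hg10 hg1d1 hu
    have hqu : 0 < deriv g1 u := hg1d1 u hu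
    have e1 : U g1 h 1 u = u := rfl
    have e2 : U g1 h 2 u = u + h ^ 2 / 2 * g1 u := rfl
    have ev1 : Vv g1 h 1 u = 1 := rfl
    have ev2 : Vv g1 h 2 u = 1 + h ^ 2 / 2 * deriv g1 u := rfl
    have h12 : U g1 h 1 u < U g1 h 2 u := by rw [e1, e2]; nlinarith
    have hv12 : Vv g1 h 1 u < Vv g1 h 2 u := by rw [ev1, ev2]; nlinarith
    refine ⟨le_of_eq e1.symm, h12, le_of_eq ev1.symm, hv12, ?_, ?_, ?_, ?_, ?_⟩
    · exact hasDerivAt_id u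
    · have : HasDerivAt (fun x => x + h ^ 2 / 2 * g1 x)
          (1 + h ^ 2 / 2 * deriv g1 u) u :=
        (hasDerivAt_id u).add (((hdg u).hasDerivAt).const_mul (h ^ 2 / 2))
      exact this
    · simp only [U, Vv]; apply le_of_eq; ring
    · have hii1 : (Vv g1 h 2 u - Vv g1 h 1 u) * g1 (U g1 h 1 u) ≤
          (U g1 h 2 u - U g1 h 1 u) * (deriv g1 (U g1 h 1 u) * Vv g1 h 1 u) := by
        simp only [U, Vv]; apply le_of_eq; ring
      exact key_step hg1C hg10 hg1d1 hg1d2 (show (0:ℝ) < U g1 h 1 u from hu) h12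
        (show (0:ℝ) < Vv g1 h 1 u from by rw [ev1]; norm_num) hv12 hii1
    · simp only [U, Vv]; apply le_of_eq; ring
  | succ k hk1 ih =>
    intro u hu
    obtain ⟨m, rfl⟩ : ∃ m, k = m + 1 := ⟨k - 1, (Nat.succ_pred_eq_of_pos hk1).symm⟩
    obtain ⟨hUge, hUlt, hV1, hVlt, hDU, hDU1, hii, hiii, hv⟩ := ih u hu
    -- abbreviations
    set uk := U g1 h (m + 1) u with huk
    set uk1 := U g1 h (m + 2) u with huk1
    set vk := Vv g1 h (m + 1) u with hvk
    set vk1 := Vv g1 h (m + 2) u with hvk1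
    have hukpos : 0 < uk := lt_of_lt_of_le hu hUge
    have huk1pos : 0 < uk1 := hukpos.trans hUlt
    have hq1 : 0 < deriv g1 uk1 := hg1d1 _ huk1pos
    have hp1 : 0 < g1 uk1 := g1_pos hg1C hg10 hg1d1 huk1pos
    have hvk1pos : (1:ℝ) ≤ vk1 := hV1.trans hVlt.le
    -- recursion identities
    have eU : U g1 h (m + 3) u = 2 * uk1 - uk + h ^ 2 * g1 uk1 := rfl
    have eV : Vv g1 h (m + 3) u = 2 * vk1 - vk + h ^ 2 * (deriv g1 uk1 * vk1) := rfl
    -- new differences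
    have hD : U g1 h (m + 3) u - uk1 = (uk1 - uk) + h ^ 2 * g1 uk1 := by rw [eU]; ring
    have hD' : Vv g1 h (m + 3) u - vk1 = (vk1 - vk) + h ^ 2 * (deriv g1 uk1 * vk1) := by
      rw [eV]; ring
    have hDpos : 0 < U g1 h (m + 3) u - uk1 := by
      rw [hD]; have := sub_pos.2 hUlt; nlinarith
    have hD'pos : 0 < Vv g1 h (m + 3) u - vk1 := by
      rw [hD']; have := sub_pos.2 hVlt; nlinarith
    -- derivative of U (m+3)
    have hDU2 : HasDerivAt (U g1 h (m + 3)) (Vv g1 h (m + 3) u) u := by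
      have hcomp : HasDerivAt (fun x => g1 (U g1 h (m + 2) x))
          (deriv g1 uk1 * vk1) u := by
        have := (hdg uk1).hasDerivAt.comp u hDU1
        exact this
      have : HasDerivAt (fun x => 2 * U g1 h (m + 2) x - U g1 h (m + 1) x
          + h ^ 2 * g1 (U g1 h (m + 2) x))
          (2 * vk1 - vk + h ^ 2 * (deriv g1 uk1 * vk1)) u :=
        ((hDU1.const_mul 2).sub hDU).add (hcomp.const_mul (h ^ 2))
      rw [eV]
      exact this.congr_deriv rfl
    -- (ii) at m+2 :  D'_{k+1} p_{k+1} ≤ D_{k+1} q_{k+1} v_{k+1}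
    have hii2 : (Vv g1 h (m + 3) u - vk1) * g1 uk1 ≤
        (U g1 h (m + 3) u - uk1) * (deriv g1 uk1 * vk1) := by
      calc (Vv g1 h (m + 3) u - vk1) * g1 uk1
          = (vk1 - vk) * g1 uk1 + h ^ 2 * (deriv g1 uk1 * vk1) * g1 uk1 := by
            rw [hD']; ring
        _ ≤ (uk1 - uk) * (deriv g1 uk1 * vk1)
              + h ^ 2 * (deriv g1 uk1 * vk1) * g1 uk1 := by linarith [hiii.le]
        _ = (U g1 h (m + 3) u - uk1) * (deriv g1 uk1 * vk1) := by rw [hD]; ring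
    -- (iii) at m+2
    have hiii2 : (Vv g1 h (m + 3) u - vk1) * g1 (U g1 h (m + 3) u) <
        (U g1 h (m + 3) u - uk1) *
          (deriv g1 (U g1 h (m + 3) u) * Vv g1 h (m + 3) u) := by
      have hlt : uk1 < U g1 h (m + 3) u := by linarith [hDpos]
      have := key_step hg1C hg10 hg1d1 hg1d2 huk1pos hlt
        (lt_of_lt_of_le one_pos hvk1pos) (by linarith [hD'pos]) hii2
      exact this
    -- (v) at m+2 : (V_{k+2}-1) D_{k+1} ≤ W_{k+2} D'_{k+1}
    have hv2 : (Vv g1 h (m + 3) u - 1) * (U g1 h (m + 3) u - uk1) ≤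
        (U g1 h (m + 3) u - u) * (Vv g1 h (m + 3) u - vk1) := by
      -- (iv) : D'_k D_{k+1} ≤ D'_{k+1} D_k  from (iii at k)
      have hiv : (vk1 - vk) * (U g1 h (m + 3) u - uk1) ≤
          (Vv g1 h (m + 3) u - vk1) * (uk1 - uk) := by
        have hsc := mul_le_mul_of_nonneg_left hiii.le h2.le
        rw [hD, hD']
        nlinarith [hsc]
      -- first lift (v at k) to new difference : W'_{k+1} D_{k+1} ≤ W_{k+1} D'_{k+1}
      have hWpos : 0 ≤ uk1 - u := by linarith [hUge, hUlt]
      have hW'pos : 0 ≤ vk1 - 1 := by linarith [hvk1pos]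
      have hDkpos : 0 < uk1 - uk := sub_pos.2 hUlt
      have hstep : (vk1 - 1) * (U g1 h (m + 3) u - uk1) ≤
          (uk1 - u) * (Vv g1 h (m + 3) u - vk1) := by
        have h1 : (vk1 - 1) * (U g1 h (m + 3) u - uk1) * (uk1 - uk) ≤
            (uk1 - u) * (Vv g1 h (m + 3) u - vk1) * (uk1 - uk) := by
          calc (vk1 - 1) * (U g1 h (m + 3) u - uk1) * (uk1 - uk)
              = ((vk1 - 1) * (uk1 - uk)) * (U g1 h (m + 3) u - uk1) := by ring
            _ ≤ ((uk1 - u) * (vk1 - vk)) * (U g1 h (m + 3) u - uk1) := by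
                exact mul_le_mul_of_nonneg_right hv hDpos.le
            _ = (uk1 - u) * ((vk1 - vk) * (U g1 h (m + 3) u - uk1)) := by ring
            _ ≤ (uk1 - u) * ((Vv g1 h (m + 3) u - vk1) * (uk1 - uk)) := by
                exact mul_le_mul_of_nonneg_left hiv hWpos
            _ = (uk1 - u) * (Vv g1 h (m + 3) u - vk1) * (uk1 - uk) := by ring
        exact le_of_mul_le_mul_right h1 hDkpos
      -- then add the diagonal term
      linarith [hstep]
    exact ⟨by linarith [hUge, hUlt], by linarith [hDpos], by linarith [hV1, hVlt],
      by linarith [hD'pos], hDU1, hDU2, hii2, hiii2, hv2⟩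

end Main

theorem stmt6
    (g1 g2 : ℝ → ℝ)
    (hg1C : ContDiff ℝ 3 g1) (hg2C : ContDiff ℝ 3 g2)
    (hg1A : AnalyticAt ℝ g1 0) (hg2A : AnalyticAt ℝ g2 0)
    (hg10 : g1 0 = 0) (hg20 : g2 0 = 0)
    (hg1d1 : ∀ x > 0, 0 < deriv g1 x) (hg2d1 : ∀ x > 0, 0 < deriv g2 x)
    (hg1d2 : ∀ x > 0, 0 < iteratedDeriv 2 g1 x) (hg2d2 : ∀ x > 0, 0 < iteratedDeriv 2 g2 x)
    (hg1d3 : ∀ x > 0, 0 ≤ iteratedDeriv 3 g1 x) (hg2d3 : ∀ x > 0, 0 ≤ iteratedDeriv 3 g2 x)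
    (n : ℕ) (hn : 2 ≤ n) (h : ℝ) (hh : h = 1 / ((n : ℝ) - 1))
    (u1 : ℝ) (hu1 : 0 < u1) (k : ℕ) (hk2 : 2 ≤ k) (hkn : k ≤ n) :
    deriv (fun x => (U g1 h k x - U g1 h 1 x) / g1 (U g1 h k x)) u1 < 0 := by
  have hhpos : 0 < h := by
    rw [hh]
    have : (1:ℝ) ≤ (n:ℝ) - 1 := by
      have : (2:ℝ) ≤ (n:ℝ) := by exact_mod_cast hn
      linarith
    positivity
  obtain ⟨j, rfl⟩ : ∃ j, k = j + 1 := ⟨k - 1, (Nat.succ_pred_eq_of_pos (by omega)).symm⟩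
  have hj1 : 1 ≤ j := by omega
  obtain ⟨hUge, hUlt, hV1, hVlt, hDU, hDU1, hii, hiii, hv⟩ :=
    main_induction hg1C hg10 hg1d1 hg1d2 hhpos j hj1 u1 hu1
  set uk := U g1 h j u1
  set uk1 := U g1 h (j + 1) u1
  set vk := Vv g1 h j u1
  set vk1 := Vv g1 h (j + 1) u1
  have hukpos : 0 < uk := lt_of_lt_of_le hu1 hUge
  have huk1pos : 0 < uk1 := hukpos.trans hUlt
  have hp1 : 0 < g1 uk1 := g1_pos hg1C hg10 hg1d1 huk1pos
  have hq1 : 0 < deriv g1 uk1 := hg1d1 _ huk1pos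
  have hWpos : 0 < uk1 - u1 := by linarith [hUge, hUlt]
  have hDkpos : 0 < uk1 - uk := sub_pos.2 hUlt
  have hvk1pos : (1:ℝ) ≤ vk1 := hV1.trans hVlt.le
  -- numerator inequality: (vk1 - 1) * g1 uk1 < (uk1 - u1) * (deriv g1 uk1 * vk1)
  have hnum : (vk1 - 1) * g1 uk1 < (uk1 - u1) * (deriv g1 uk1 * vk1) := by
    have h1 : (vk1 - 1) * g1 uk1 * (uk1 - uk) ≤
        (uk1 - u1) * ((vk1 - vk) * g1 uk1) := by
      calc (vk1 - 1) * g1 uk1 * (uk1 - uk)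
          = ((vk1 - 1) * (uk1 - uk)) * g1 uk1 := by ring
        _ ≤ ((uk1 - u1) * (vk1 - vk)) * g1 uk1 := mul_le_mul_of_nonneg_right hv hp1.le
        _ = (uk1 - u1) * ((vk1 - vk) * g1 uk1) := by ring
    have h2 : (uk1 - u1) * ((vk1 - vk) * g1 uk1) <
        (uk1 - u1) * ((uk1 - uk) * (deriv g1 uk1 * vk1)) :=
      mul_lt_mul_of_pos_left hiii hWpos
    have h3 : (vk1 - 1) * g1 uk1 * (uk1 - uk) <
        (uk1 - u1) * (deriv g1 uk1 * vk1) * (uk1 - uk) := by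
      calc (vk1 - 1) * g1 uk1 * (uk1 - uk) ≤ (uk1 - u1) * ((vk1 - vk) * g1 uk1) := h1
        _ < (uk1 - u1) * ((uk1 - uk) * (deriv g1 uk1 * vk1)) := h2
        _ = (uk1 - u1) * (deriv g1 uk1 * vk1) * (uk1 - uk) := by ring
    exact lt_of_mul_lt_mul_right h3 hDkpos.le
  -- compute the derivative
  have hdg := g1_diff hg1C
  have hnumd : HasDerivAt (fun x => U g1 h (j + 1) x - U g1 h 1 x) (vk1 - 1) u1 := by
    have : HasDerivAt (fun x => U g1 h (j + 1) x - x) (vk1 - 1) u1 :=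
      hDU1.sub (hasDerivAt_id u1)
    exact this
  have hdend : HasDerivAt (fun x => g1 (U g1 h (j + 1) x)) (deriv g1 uk1 * vk1) u1 :=
    (hdg uk1).hasDerivAt.comp u1 hDU1
  have hquot := hnumd.div hdend (ne_of_gt hp1)
  rw [show (fun x => (U g1 h (j + 1) x - U g1 h 1 x) / g1 (U g1 h (j + 1) x)) = ((fun x => U g1 h (j + 1) x - U g1 h 1 x) / fun x => g1 (U g1 h (j + 1) x)) from rfl]
  rw [hquot.deriv]
  apply div_neg_of_neg_of_pos
  · have : uk1 - u1 = (fun x => U g1 h (j + 1) x - U g1 h 1 x) u1 := rfl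
    simp only [U]
    nlinarith [hnum]
  · positivity
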